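/- Let P be a 2-torsion free unital ring with a nontrivial idempotent e₁, set e₂ = 1 − e₁, and let d : P → P be a commuting Jordan derivation. Then d(e₁) = 0 and d(e₂) = 0. -/
import Mathlib

/-- Lemma 2.2: d(e₁) = 0 and d(e₂) = 0 for a commuting Jordan derivation. -/
theorem commuting_jordan_derivation_idempotent {P : Type*} [Ring P]
    (htf : ∀ p : P, 2 • p = 0 → p = 0)
    (e₁ : P) (he : e₁ * e₁ = e₁) (he0 : e₁ ≠ 0) (he1 : e₁ ≠ 1)
    (d : P → P)
    (hadd : ∀ x y : P, d (x + y) = d x + d y)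
    (hJ : ∀ p : P, d (p ^ 2) = d p * p + p * d p)
    (hC : ∀ p : P, d p * p = p * d p) :
    d e₁ = 0 ∧ d (1 - e₁) = 0 := by
  have key : ∀ e : P, e * e = e → d e = 0 := by
    intro e he
    have h1 : d e = e * d e + e * d e := by
      have := hJ e
      rw [sq, he, hC] at this
      exact this
    have h2 : e * d e = e * d e + e * d e := by
      calc e * d e = e * (e * d e + e * d e) := by rw [← h1]
        _ = e * d e + e * d e := by rw [mul_add, ← mul_assoc, he]
    have h3 : e * d e = 0 := by
      have : e * d e + e * d e = e * d e + 0 := by rw [add_zero]; exact h2.symm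
      exact (add_left_cancel this)
    rw [h1, h3, add_zero]
  have hid : (1 - e₁) * (1 - e₁) = 1 - e₁ := by
    have h : (1 - e₁) * (1 - e₁) = 1 - e₁ - (e₁ - e₁ * e₁) := by noncomm_ring
    rw [h, he]; abel
  exact ⟨key e₁ he, key (1 - e₁) hid⟩
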